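/- For each j ∈ {1, …, n} let T_j be a finite set and P_j : T_j → ℝ a probability mass function with 0 < P_j(s) < 1 for every s ∈ T_j. A set sequence is a tuple S = (S_1, …, S_n) with S_j ⊆ T_j, identified with the set of pairs {(j, s) : s ∈ S_j}; define g(S) = 1 − Π_{j=1}^n (1 − Σ_{s ∈ S_j} P_j(s)). Fix μ ≥ 0 and consider the polytope of vectors z = (z_j(s))_{j ∈ {1,…,n}, s ∈ T_j} satisfying: z_j(s) ≥ 0 for all (j, s); Σ_{(j,s)} z_j(s) = μ; and Σ_{(j,s) ∈ S} z_j(s) ≤ g(S) for every set sequence S. Then for every extreme point z of this polytope, letting Y = {(j, s) : z_j(s) > 0} and m = |Y|, there exist set sequences S̃_1 ⊊ S̃_2 ⊊ ⋯ ⊊ S̃_m such that: |S̃_k \ S̃_{k−1}| = 1 for every 1 ≤ k ≤ m (with S̃_0 = ∅); S̃_m = Y; Σ_{(j,s) ∈ S̃_k} z_j(s) = g(S̃_k) for every 1 ≤ k ≤ m − 1; and Σ_{(j,s) ∈ S̃_m} z_j(s) = min(μ, g(S̃_m)). -/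

import Mathlib

open Finset

section Aux

variable {n : ℕ} {T : Fin n → Type*} [∀ j, Fintype (T j)] [∀ j, DecidableEq (T j)]

/-- The set sequence associated to a finset of pairs. -/
def Sof (A : Finset (Σ j, T j)) : ∀ j, Finset (T j) :=
  fun j => Finset.univ.filter fun s => (⟨j, s⟩ : Σ j, T j) ∈ A

lemma mem_Sof {A : Finset (Σ j, T j)} {j : Fin n} {s : T j} :
    s ∈ Sof A j ↔ (⟨j, s⟩ : Σ j, T j) ∈ A := by simp [Sof]

lemma sigma_Sof (A : Finset (Σ j, T j)) : Finset.univ.sigma (Sof A) = A := by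
  ext p
  cases p with
  | mk j s => simp [mem_Sof]

lemma Sof_sigma (S : ∀ j, Finset (T j)) : Sof (Finset.univ.sigma S) = S := by
  funext j; ext s; simp [mem_Sof]

lemma sum_Sof (w : (Σ j, T j) → ℝ) (A : Finset (Σ j, T j)) :
    ∑ j, ∑ s ∈ Sof A j, w ⟨j, s⟩ = ∑ p ∈ A, w p := by
  conv_rhs => rw [← sigma_Sof A]
  rw [Finset.sum_sigma]

lemma card_Sof (A : Finset (Σ j, T j)) : ∑ j, (Sof A j).card = A.card := by
  conv_rhs => rw [← sigma_Sof A]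
  rw [Finset.card_sigma]

lemma Sof_union (A B : Finset (Σ j, T j)) (j : Fin n) :
    Sof (A ∪ B) j = Sof A j ∪ Sof B j := by
  ext s; simp [mem_Sof]

lemma Sof_inter (A B : Finset (Σ j, T j)) (j : Fin n) :
    Sof (A ∩ B) j = Sof A j ∩ Sof B j := by
  ext s; simp [mem_Sof]

lemma Sof_sdiff (A B : Finset (Σ j, T j)) (j : Fin n) :
    Sof (A \ B) j = Sof A j \ Sof B j := by
  ext s; simp [mem_Sof]

lemma Sof_mono {A B : Finset (Σ j, T j)} (h : A ⊆ B) (j : Fin n) :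
    Sof A j ⊆ Sof B j := by
  intro s hs; rw [mem_Sof] at hs ⊢; exact h hs

lemma Sof_empty (j : Fin n) : Sof (∅ : Finset (Σ j, T j)) j = ∅ := by
  ext s; simp [mem_Sof]

/-- The coverage function on finsets of pairs. -/
noncomputable def GA (Pm : ∀ j, T j → ℝ) (A : Finset (Σ j, T j)) : ℝ :=
  1 - ∏ j, (1 - ∑ s ∈ Sof A j, Pm j s)

variable {Pm : ∀ j, T j → ℝ}

lemma PA_le_one (hP0 : ∀ j s, 0 ≤ Pm j s) (hPsum : ∀ j, ∑ s, Pm j s = 1)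
    (j : Fin n) (A : Finset (Σ j, T j)) : ∑ s ∈ Sof A j, Pm j s ≤ 1 := by
  rw [← hPsum j]
  exact Finset.sum_le_sum_of_subset_of_nonneg (Finset.subset_univ _)
    (fun i _ _ => hP0 j i)

lemma PA_mono (hP0 : ∀ j s, 0 ≤ Pm j s) {A B : Finset (Σ j, T j)} (h : A ⊆ B)
    (j : Fin n) : ∑ s ∈ Sof A j, Pm j s ≤ ∑ s ∈ Sof B j, Pm j s :=
  Finset.sum_le_sum_of_subset_of_nonneg (Sof_mono h j) (fun i _ _ => hP0 j i)

lemma GA_empty : GA Pm (∅ : Finset (Σ j, T j)) = 0 := by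
  simp [GA, Sof_empty]

lemma GA_mono (hP0 : ∀ j s, 0 ≤ Pm j s) (hPsum : ∀ j, ∑ s, Pm j s = 1)
    {A B : Finset (Σ j, T j)} (h : A ⊆ B) : GA Pm A ≤ GA Pm B := by
  unfold GA
  have : ∏ j, (1 - ∑ s ∈ Sof B j, Pm j s) ≤ ∏ j, (1 - ∑ s ∈ Sof A j, Pm j s) := by
    apply Finset.prod_le_prod
    · intro j _; linarith [PA_le_one hP0 hPsum j B]
    · intro j _; linarith [PA_mono hP0 h j]
  linarith

/-- Supermodularity of a product of coordinatewise-modular factors. -/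
lemma prod_super {ι : Type*} (s : Finset ι) (u a b i : ι → ℝ)
    (h0 : ∀ j ∈ s, 0 ≤ u j) (hua : ∀ j ∈ s, u j ≤ a j) (hub : ∀ j ∈ s, u j ≤ b j)
    (hsum : ∀ j ∈ s, a j + b j = u j + i j) :
    ((∏ j ∈ s, a j) + ∏ j ∈ s, b j ≤ (∏ j ∈ s, u j) + ∏ j ∈ s, i j) ∧
    0 ≤ ∏ j ∈ s, u j ∧ ((∏ j ∈ s, u j) ≤ ∏ j ∈ s, a j) ∧
    ((∏ j ∈ s, u j) ≤ ∏ j ∈ s, b j) := by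
  classical
  induction s using Finset.induction with
  | empty => simp
  | insert _ _ hx ih =>
    rename_i x t
    have h0' := fun j hj => h0 j (Finset.mem_insert_of_mem hj)
    have hua' := fun j hj => hua j (Finset.mem_insert_of_mem hj)
    have hub' := fun j hj => hub j (Finset.mem_insert_of_mem hj)
    have hsum' := fun j hj => hsum j (Finset.mem_insert_of_mem hj)
    obtain ⟨H1, H2, H3, H4⟩ := ih h0' hua' hub' hsum'
    rw [Finset.prod_insert hx, Finset.prod_insert hx, Finset.prod_insert hx,
      Finset.prod_insert hx]
    have hx0 := h0 x (Finset.mem_insert_self x t)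
    have hxa := hua x (Finset.mem_insert_self x t)
    have hxb := hub x (Finset.mem_insert_self x t)
    have hxs := hsum x (Finset.mem_insert_self x t)
    set U := ∏ j ∈ t, u j
    set A := ∏ j ∈ t, a j
    set B := ∏ j ∈ t, b j
    set I := ∏ j ∈ t, i j
    have hxi : 0 ≤ i x := by linarith
    refine ⟨?_, mul_nonneg hx0 H2, ?_, ?_⟩
    · nlinarith [mul_nonneg (sub_nonneg.2 H3) (sub_nonneg.2 hxb),
        mul_nonneg (sub_nonneg.2 H4) (sub_nonneg.2 hxa),
        mul_nonneg (by linarith : (0:ℝ) ≤ U + I - A - B) hxi]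
    · exact mul_le_mul hxa H3 H2 (le_trans hx0 hxa)
    · exact mul_le_mul hxb H4 H2 (le_trans hx0 hxb)

lemma GA_submod (hP0 : ∀ j s, 0 ≤ Pm j s) (hPsum : ∀ j, ∑ s, Pm j s = 1)
    (A B : Finset (Σ j, T j)) :
    GA Pm (A ∪ B) + GA Pm (A ∩ B) ≤ GA Pm A + GA Pm B := by
  unfold GA
  have key := prod_super Finset.univ
    (fun j => 1 - ∑ s ∈ Sof (A ∪ B) j, Pm j s)
    (fun j => 1 - ∑ s ∈ Sof A j, Pm j s)
    (fun j => 1 - ∑ s ∈ Sof B j, Pm j s)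
    (fun j => 1 - ∑ s ∈ Sof (A ∩ B) j, Pm j s)
    (fun j _ => by linarith [PA_le_one hP0 hPsum j (A ∪ B)])
    (fun j _ => by linarith [PA_mono hP0 (Finset.subset_union_left : A ⊆ A ∪ B) j])
    (fun j _ => by linarith [PA_mono hP0 (Finset.subset_union_right : B ⊆ A ∪ B) j])
    (fun j _ => by
      have := Finset.sum_union_inter (s₁ := Sof A j) (s₂ := Sof B j) (f := Pm j)
      rw [← Sof_union, ← Sof_inter] at this
      linarith)
  linarith [key.1]

end Aux

/-- From a union/intersection-closed family separating the points of `Y`,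
extract a complete chain from `∅` to `Y`. -/
lemma chain_of_lattice {E : Type*} [Fintype E] [DecidableEq E] (Y : Finset E)
    (F : Finset E → Prop) (hsub : ∀ A, F A → A ⊆ Y) (hempty : F (∅ : Finset E)) (hY : F Y)
    (hcross : ∀ A B, F A → F B → F (A ∪ B) ∧ F (A ∩ B))
    (hsep : ∀ p q, p ∈ Y → q ∈ Y → p ≠ q → ∃ D, F D ∧ ¬(p ∈ D ↔ q ∈ D)) :
    ∃ Cc : ℕ → Finset E, Cc 0 = ∅ ∧ Cc Y.card = Y ∧
      (∀ k, 1 ≤ k → k ≤ Y.card → Cc (k-1) ⊆ Cc k ∧ (Cc k \ Cc (k-1)).card = 1) ∧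
      (∀ k, k ≤ Y.card → F (Cc k) ∧ (Cc k).card = k) := by
  classical
  -- one-element growth step
  have step : ∀ A, F A → A ≠ Y → ∃ B, F B ∧ A ⊆ B ∧ (B \ A).card = 1 := by
    intro A hFA hAY
    have h𝒞ne : (Finset.univ.filter (fun B => F B ∧ A ⊂ B)).Nonempty := by
      refine ⟨Y, Finset.mem_filter.2 ⟨Finset.mem_univ _, hY, ?_⟩⟩
      exact HasSubset.Subset.ssubset_of_ne (hsub A hFA) hAY
    obtain ⟨B, hBmem, hBmin⟩ :=
      Finset.exists_min_image (Finset.univ.filter (fun B => F B ∧ A ⊂ B)) Finset.card h𝒞ne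
    obtain ⟨-, hFB, hAB⟩ := Finset.mem_filter.1 hBmem
    refine ⟨B, hFB, hAB.1, ?_⟩
    have hne : (B \ A).Nonempty := by
      obtain ⟨x, hxB, hxA⟩ := Finset.exists_of_ssubset hAB
      exact ⟨x, Finset.mem_sdiff.2 ⟨hxB, hxA⟩⟩
    by_contra hcard
    have h2 : 1 < (B \ A).card := by
      have := Finset.card_pos.2 hne
      omega
    obtain ⟨p, hp, q, hq, hpq⟩ := Finset.one_lt_card.1 h2
    obtain ⟨hpB, hpA⟩ := Finset.mem_sdiff.1 hp
    obtain ⟨hqB, hqA⟩ := Finset.mem_sdiff.1 hq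
    have key : ∀ p' q', p' ∈ B → p' ∉ A → q' ∈ B → q' ∉ A → ∀ D, F D →
        p' ∈ D → q' ∉ D → False := by
      intro p' q' hp'B hp'A hq'B hq'A D hFD hp'D hq'D
      set B' := A ∪ (B ∩ D) with hB'
      have hFB' : F B' := (hcross A (B ∩ D) hFA (hcross B D hFB hFD).2).1
      have hAB' : A ⊂ B' := by
        refine HasSubset.Subset.ssubset_of_ne Finset.subset_union_left ?_
        intro h
        exact hp'A (h ▸ (Finset.mem_union_right _ (Finset.mem_inter.2 ⟨hp'B, hp'D⟩)))
      have hB'B : B' ⊂ B := by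
        refine HasSubset.Subset.ssubset_of_ne
          (Finset.union_subset hAB.1 Finset.inter_subset_left) ?_
        intro h
        have : q' ∈ B' := h ▸ hq'B
        rcases Finset.mem_union.1 this with h' | h'
        · exact hq'A h'
        · exact hq'D (Finset.mem_inter.1 h').2
      have := hBmin B' (Finset.mem_filter.2 ⟨Finset.mem_univ _, hFB', hAB'⟩)
      have := Finset.card_lt_card hB'B
      omega
    obtain ⟨D, hFD, hD⟩ := hsep p q (hsub B hFB hpB) (hsub B hFB hqB) hpq
    by_cases hpD : p ∈ D
    · exact key p q hpB hpA hqB hqA D hFD hpD (fun hqD => hD ⟨fun _ => hqD, fun _ => hpD⟩)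
    · have hqD : q ∈ D := by tauto
      exact key q p hqB hqA hpB hpA D hFD hqD hpD
  have step' : ∀ A, ∃ B, F A → A ≠ Y → (F B ∧ A ⊆ B ∧ (B \ A).card = 1) := by
    intro A
    by_cases h : F A ∧ A ≠ Y
    · obtain ⟨B, hB⟩ := step A h.1 h.2
      exact ⟨B, fun _ _ => hB⟩
    · exact ⟨A, fun h1 h2 => absurd ⟨h1, h2⟩ h⟩
  choose nxt hnxt using step'
  have main : ∀ k, k ≤ Y.card →
      (F (Nat.rec ∅ (fun _ ih => nxt ih) k : Finset E) ∧
      (Nat.rec ∅ (fun _ ih => nxt ih) k : Finset E).card = k) ∧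
      (1 ≤ k → (Nat.rec ∅ (fun _ ih => nxt ih) (k-1) : Finset E) ⊆
          Nat.rec ∅ (fun _ ih => nxt ih) k ∧
        ((Nat.rec ∅ (fun _ ih => nxt ih) k : Finset E) \
          Nat.rec ∅ (fun _ ih => nxt ih) (k-1)).card = 1) := by
    intro k
    induction k with
    | zero => intro _; exact ⟨⟨hempty, by simp⟩, by omega⟩
    | succ k ih =>
      intro hk
      obtain ⟨⟨hFk, hcardk⟩, -⟩ := ih (by omega)
      set A : Finset E := Nat.rec ∅ (fun _ ih => nxt ih) k with hA
      have hAne : A ≠ Y := by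
        intro h
        have := hcardk
        rw [h] at this
        omega
      obtain ⟨hFB, hsubB, hcardB⟩ := hnxt A hFk hAne
      have hsucc : (Nat.rec ∅ (fun _ ih => nxt ih) (k+1) : Finset E) = nxt A := rfl
      have hcard' : (nxt A).card = k + 1 := by
        have h1 := Finset.card_sdiff_of_subset hsubB
        have h2 := Finset.card_le_card hsubB
        omega
      refine ⟨⟨by rw [hsucc]; exact hFB, by rw [hsucc]; exact hcard'⟩, fun _ => ?_⟩
      simp only [Nat.add_sub_cancel, hsucc]
      exact ⟨hsubB, hcardB⟩
  refine ⟨fun k => Nat.rec ∅ (fun _ ih => nxt ih) k, rfl, ?_, ?_, ?_⟩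
  · show (Nat.rec ∅ (fun _ ih => nxt ih) Y.card : Finset E) = Y
    have h := (main Y.card le_rfl).1
    exact Finset.eq_of_subset_of_card_le (hsub _ h.1) (by omega)
  · intro k hk1 hk2
    exact (main k hk2).2 hk1
  · intro k hk
    exact (main k hk).1

set_option maxHeartbeats 1000000 in
/-- Lemma 6.6 (adapted from Gamlath et al.): structure of the extreme points of the
selection-rule polytope. With `g(S) = 1 − Π_j (1 − Σ_{s ∈ S_j} P_j(s))` and the polytope of
nonnegative vectors `z` with `Σ z = μ` and `Σ_{(j,s) ∈ S} z_j(s) ≤ g(S)` for all set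
sequences `S`, every extreme point `z` with support `Y` of size `m` admits an increasing
chain `S̃_1 ⊊ ⋯ ⊊ S̃_m` of set sequences, each adding exactly one pair, ending at `Y`,
whose constraints are tight (the last one tight at `min(μ, g(S̃_m))`). -/
theorem extreme_points_of_selection_polytope
    (n : ℕ) (T : Fin n → Type*) [∀ j, Fintype (T j)] [∀ j, DecidableEq (T j)]
    (Pm : ∀ j, T j → ℝ) (hP0 : ∀ j s, 0 < Pm j s) (hP1 : ∀ j s, Pm j s < 1)
    (hPsum : ∀ j, ∑ s, Pm j s = 1)
    (g : (∀ j, Finset (T j)) → ℝ)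
    (hg : ∀ S, g S = 1 - ∏ j, (1 - ∑ s ∈ S j, Pm j s))
    (μ : ℝ) (hμ : 0 ≤ μ)
    (C : Set ((Σ j, T j) → ℝ))
    (hC : C = {z | (∀ p, 0 ≤ z p) ∧ (∑ p, z p = μ) ∧
      ∀ S : ∀ j, Finset (T j), ∑ j, ∑ s ∈ S j, z ⟨j, s⟩ ≤ g S})
    (z : (Σ j, T j) → ℝ) (hz : z ∈ Set.extremePoints ℝ C) :
    ∃ (m : ℕ) (St : ℕ → ∀ j, Finset (T j)),
      m = (Finset.univ.filter (fun p : Σ j, T j => 0 < z p)).card ∧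
      (∀ j, St 0 j = (∅ : Finset (T j))) ∧
      (∀ k, 1 ≤ k → k ≤ m → ∀ j, St (k - 1) j ⊆ St k j) ∧
      (∀ k, 1 ≤ k → k ≤ m → ∑ j, (St k j \ St (k - 1) j).card = 1) ∧
      (∀ j (s : T j), s ∈ St m j ↔ 0 < z ⟨j, s⟩) ∧
      (∀ k, 1 ≤ k → k ≤ m - 1 → ∑ j, ∑ s ∈ St k j, z ⟨j, s⟩ = g (St k)) ∧
      (∑ j, ∑ s ∈ St m j, z ⟨j, s⟩ = min μ (g (St m))) := by
  classical
  subst hC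
  rw [mem_extremePoints] at hz
  obtain ⟨hzC, hext⟩ := hz
  simp only [Set.mem_setOf_eq] at hzC
  obtain ⟨hz0, hzsum, hzcon⟩ := hzC
  have hP0' : ∀ j s, 0 ≤ Pm j s := fun j s => (hP0 j s).le
  set Y : Finset (Σ j, T j) := Finset.univ.filter (fun p => 0 < z p) with hYdef
  have hmemY : ∀ p : Σ j, T j, p ∈ Y ↔ 0 < z p := by
    intro p; rw [hYdef, Finset.mem_filter]; simp
  have hzY : ∀ p, p ∉ Y → z p = 0 := by
    intro p hp
    by_contra h
    exact hp ((hmemY p).2 (lt_of_le_of_ne (hz0 p) (Ne.symm h)))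
  have hzA : ∀ A : Finset (Σ j, T j), ∑ p ∈ A, z p ≤ GA Pm A := by
    intro A
    have h := hzcon (Sof A)
    rw [hg, sum_Sof] at h
    exact h
  have hsum_inter : ∀ A : Finset (Σ j, T j), ∑ p ∈ A, z p = ∑ p ∈ A ∩ Y, z p := by
    intro A
    refine (Finset.sum_subset Finset.inter_subset_left ?_).symm
    intro p hpA hp
    exact hzY p (fun hpY => hp (Finset.mem_inter.2 ⟨hpA, hpY⟩))
  have hYsum : ∑ p ∈ Y, z p = μ := by
    rw [hYdef, ← hzsum]
    exact Finset.sum_filter_of_ne (fun p _ hne => lt_of_le_of_ne (hz0 p) (Ne.symm hne))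
  -- the tight family
  have tight_cross : ∀ A B : Finset (Σ j, T j),
      (A ⊆ Y ∧ ∑ p ∈ A, z p = GA Pm A) → (B ⊆ Y ∧ ∑ p ∈ B, z p = GA Pm B) →
      ((A ∪ B) ⊆ Y ∧ ∑ p ∈ A ∪ B, z p = GA Pm (A ∪ B)) ∧
      ((A ∩ B) ⊆ Y ∧ ∑ p ∈ A ∩ B, z p = GA Pm (A ∩ B)) := by
    intro A B ⟨hAY, hA⟩ ⟨hBY, hB⟩
    have h1 := hzA (A ∪ B)
    have h2 := hzA (A ∩ B)
    have h3 := GA_submod hP0' hPsum A B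
    have h4 : ∑ p ∈ A ∪ B, z p + ∑ p ∈ A ∩ B, z p = ∑ p ∈ A, z p + ∑ p ∈ B, z p :=
      Finset.sum_union_inter
    exact ⟨⟨Finset.union_subset hAY hBY, by linarith⟩,
      ⟨Finset.inter_subset_left.trans hAY, by linarith⟩⟩
  -- separation from extremality
  have sep : ∀ p q : Σ j, T j, p ∈ Y → q ∈ Y → p ≠ q →
      ∃ D : Finset (Σ j, T j), (D ⊆ Y ∧ ∑ r ∈ D, z r = GA Pm D) ∧ ¬(p ∈ D ↔ q ∈ D) := by
    intro p q hpY hqY hpq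
    by_contra hcon
    push_neg at hcon
    have slack : ∀ A : Finset (Σ j, T j), ¬(p ∈ A ↔ q ∈ A) → ∑ r ∈ A, z r < GA Pm A := by
      intro A hA
      have hne : ¬ (∑ r ∈ A ∩ Y, z r = GA Pm (A ∩ Y)) := by
        intro ht
        have h := hcon (A ∩ Y) ⟨Finset.inter_subset_right, ht⟩
        rw [Finset.mem_inter, Finset.mem_inter] at h
        tauto
      have hlt : ∑ r ∈ A ∩ Y, z r < GA Pm (A ∩ Y) := lt_of_le_of_ne (hzA _) hne
      calc ∑ r ∈ A, z r = ∑ r ∈ A ∩ Y, z r := hsum_inter A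
        _ < GA Pm (A ∩ Y) := hlt
        _ ≤ GA Pm A := GA_mono hP0' hPsum Finset.inter_subset_left
    have h𝒜ne : (Finset.univ.filter
        (fun A : Finset (Σ j, T j) => ¬(p ∈ A ↔ q ∈ A))).Nonempty := by
      refine ⟨{p}, Finset.mem_filter.2 ⟨Finset.mem_univ _, ?_⟩⟩
      simp [Ne.symm hpq]
    set 𝒜 := Finset.univ.filter (fun A : Finset (Σ j, T j) => ¬(p ∈ A ↔ q ∈ A)) with h𝒜
    set ε : ℝ := min (min (z p) (z q))
      (𝒜.inf' h𝒜ne (fun A => GA Pm A - ∑ r ∈ A, z r)) with hε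
    have hzp : 0 < z p := (hmemY p).1 hpY
    have hzq : 0 < z q := (hmemY q).1 hqY
    have hεpos : 0 < ε := by
      apply lt_min (lt_min hzp hzq)
      rw [Finset.lt_inf'_iff]
      intro A hA
      have := slack A (Finset.mem_filter.1 hA).2
      linarith
    have hεp : ε ≤ z p := le_trans (min_le_left _ _) (min_le_left _ _)
    have hεq : ε ≤ z q := le_trans (min_le_left _ _) (min_le_right _ _)
    have hεA : ∀ A : Finset (Σ j, T j), ¬(p ∈ A ↔ q ∈ A) →
        ε ≤ GA Pm A - ∑ r ∈ A, z r := by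
      intro A hA
      exact le_trans (min_le_right _ _)
        (Finset.inf'_le (fun A => GA Pm A - ∑ r ∈ A, z r)
          (Finset.mem_filter.2 ⟨Finset.mem_univ _, hA⟩))
    set d : (Σ j, T j) → ℝ :=
      fun r => (if r = p then 1 else 0) - (if r = q then 1 else 0) with hd
    have hdp : d p = 1 := by simp [hd, hpq]
    have hdq : d q = -1 := by simp [hd, Ne.symm hpq]
    have hsumd : ∀ A : Finset (Σ j, T j), ∑ r ∈ A, d r =
        (if p ∈ A then (1:ℝ) else 0) - (if q ∈ A then (1:ℝ) else 0) := by
      intro A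
      rw [hd, Finset.sum_sub_distrib]
      congr 1 <;> simp
    have hmem : ∀ σ : ℝ, σ = 1 ∨ σ = -1 →
        (fun r => z r + σ * ε * d r) ∈ {z : (Σ j, T j) → ℝ | (∀ p, 0 ≤ z p) ∧
          (∑ p, z p = μ) ∧
          ∀ S : ∀ j, Finset (T j), ∑ j, ∑ s ∈ S j, z ⟨j, s⟩ ≤ g S} := by
      intro σ hσ
      have hσle : σ ≤ 1 ∧ -1 ≤ σ := by rcases hσ with h | h <;> rw [h] <;> norm_num
      refine ⟨?_, ?_, ?_⟩
      · intro r
        show 0 ≤ z r + σ * ε * d r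
        by_cases hrp : r = p
        · subst hrp
          rw [hdp]
          nlinarith [hσle.1, hσle.2]
        · by_cases hrq : r = q
          · subst hrq
            rw [hdq]
            nlinarith [hσle.1, hσle.2]
          · have : d r = 0 := by simp [hd, hrp, hrq]
            rw [this]
            simpa using hz0 r
      · show ∑ r, (z r + σ * ε * d r) = μ
        have : ∑ r, (z r + σ * ε * d r) = ∑ r, z r + σ * ε * ∑ r, d r := by
          rw [Finset.sum_add_distrib, Finset.mul_sum]
        rw [this, hsumd Finset.univ]
        simp [hzsum]
      · intro S
        show ∑ j, ∑ s ∈ S j, (z ⟨j, s⟩ + σ * ε * d ⟨j, s⟩) ≤ g S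
        have hGA : g S = GA Pm (Finset.univ.sigma S) := by
          rw [hg]
          unfold GA
          rw [Sof_sigma]
        rw [hGA]
        have hLHS : ∑ j, ∑ s ∈ S j, (z ⟨j, s⟩ + σ * ε * d ⟨j, s⟩) =
            ∑ r ∈ Finset.univ.sigma S, (z r + σ * ε * d r) :=
            (Finset.sum_sigma Finset.univ S (fun r => z r + σ * ε * d r)).symm
        rw [hLHS]
        set A := Finset.univ.sigma S with hAdef
        have hsplit : ∑ r ∈ A, (z r + σ * ε * d r) =
            ∑ r ∈ A, z r + σ * ε * ∑ r ∈ A, d r := by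
          rw [Finset.sum_add_distrib, Finset.mul_sum]
        rw [hsplit, hsumd A]
        by_cases hiff : p ∈ A ↔ q ∈ A
        · have h0 : (if p ∈ A then (1:ℝ) else 0) - (if q ∈ A then (1:ℝ) else 0) = 0 := by
            by_cases h : p ∈ A
            · simp [h, hiff.1 h]
            · have hq' : q ∉ A := fun hq' => h (hiff.2 hq')
              simp [h, hq']
          rw [h0]
          simpa using hzA A
        · have hsl := hεA A hiff
          have habs : ((if p ∈ A then (1:ℝ) else 0) - (if q ∈ A then (1:ℝ) else 0)) = 1 ∨
              ((if p ∈ A then (1:ℝ) else 0) - (if q ∈ A then (1:ℝ) else 0)) = -1 := by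
            by_cases h1 : p ∈ A <;> by_cases h2 : q ∈ A <;> simp [h1, h2] at hiff ⊢
          rcases habs with h | h <;> rw [h] <;> rcases hσ with h' | h' <;> rw [h'] <;>
            linarith
    have hz1 := hmem 1 (Or.inl rfl)
    have hz2 := hmem (-1) (Or.inr rfl)
    have hseg : z ∈ openSegment ℝ (fun r => z r + (-1) * ε * d r)
        (fun r => z r + 1 * ε * d r) := by
      refine ⟨1/2, 1/2, by norm_num, by norm_num, by norm_num, ?_⟩
      funext r
      simp only [Pi.add_apply, Pi.smul_apply, smul_eq_mul]
      ring
    have heq := (hext _ hz2 _ hz1 hseg).1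
    have hp := congrFun heq p
    simp only [hdp] at hp
    have : z p + -1 * ε * 1 = z p := hp
    linarith
  -- build the chain
  obtain ⟨Cc, hCc0, hCcm, hCcstep, hCcF⟩ := chain_of_lattice Y
    (fun A => (A ⊆ Y ∧ ∑ p ∈ A, z p = GA Pm A) ∨ A = Y)
    (by rintro A (h | rfl); exacts [h.1, subset_rfl])
    (Or.inl ⟨Finset.empty_subset _, by simp [GA_empty]⟩)
    (Or.inr rfl)
    (by
      rintro A B (hA | rfl) (hB | rfl)
      · exact ⟨Or.inl (tight_cross A B hA hB).1, Or.inl (tight_cross A B hA hB).2⟩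
      · refine ⟨Or.inr (Finset.union_eq_right.2 hA.1), Or.inl ?_⟩
        rwa [Finset.inter_eq_left.2 hA.1]
      · refine ⟨Or.inr (Finset.union_eq_left.2 hB.1), Or.inl ?_⟩
        rwa [Finset.inter_eq_right.2 hB.1]
      · exact ⟨Or.inr (Finset.union_self _), Or.inr (Finset.inter_self _)⟩)
    (by
      intro p q hpY hqY hpq
      obtain ⟨D, hD, hsep⟩ := sep p q hpY hqY hpq
      exact ⟨D, Or.inl hD, hsep⟩)
  refine ⟨Y.card, fun k => Sof (Cc k), rfl, ?_, ?_, ?_, ?_, ?_, ?_⟩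
  · intro j
    show Sof (Cc 0) j = ∅
    rw [hCc0]
    exact Sof_empty j
  · intro k hk1 hk2 j
    exact Sof_mono ((hCcstep k hk1 hk2).1) j
  · intro k hk1 hk2
    show ∑ j, ((Sof (Cc k) j) \ (Sof (Cc (k - 1)) j)).card = 1
    simp only [← Sof_sdiff]
    rw [card_Sof]
    exact (hCcstep k hk1 hk2).2
  · intro j s
    show s ∈ Sof (Cc Y.card) j ↔ 0 < z ⟨j, s⟩
    rw [hCcm, mem_Sof, hmemY]
  · intro k hk1 hk2
    have hkm : k < Y.card := by omega
    obtain ⟨hF, hcard⟩ := hCcF k (by omega)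
    have htight : Cc k ⊆ Y ∧ ∑ p ∈ Cc k, z p = GA Pm (Cc k) := by
      rcases hF with h | h
      · exact h
      · exfalso
        rw [h] at hcard
        omega
    show ∑ j, ∑ s ∈ Sof (Cc k) j, z ⟨j, s⟩ = g (Sof (Cc k))
    rw [sum_Sof, hg]
    exact htight.2
  · show ∑ j, ∑ s ∈ Sof (Cc Y.card) j, z ⟨j, s⟩ = min μ (g (Sof (Cc Y.card)))
    rw [hCcm, sum_Sof, hg]
    show ∑ p ∈ Y, z p = min μ (GA Pm Y)
    rw [hYsum]
    exact (min_eq_left (hYsum ▸ hzA Y)).symm
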